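/- Let H be a real inner product space, let z : H → ℝ, y ∈ {−1, 1}, and θ ∈ H, and suppose z has gradient g at θ with g ≠ 0. Write m(θ') = y·z(θ') and suppose for all Δ ∈ H: m(θ + Δ) ≥ m(θ) + ⟪y·g, Δ⟫ − (β/2)·‖Δ‖², with β > 0. If 0 < η ≤ 2/β, then for the SGD step Δ = η·( y / (1 + exp(m(θ))) )·g one has m(θ + Δ) > m(θ); that is, a single logistic-loss SGD update with step size at most 2/β strictly increases the signed margin. -/

import Mathlib

open scoped RealInnerProductSpace

/-- Strict margin increase under `β`-smoothness with step size `η ≤ 2/β`: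
if `g ≠ 0`, the margin `m(θ') = y·z(θ')` is `β`-smooth, and `0 < η ≤ 2/β`,
then the logistic-loss SGD step `Δ = η·(y/(1+exp(m(θ))))·g` strictly increases
the signed margin: `m(θ+Δ) > m(θ)`. -/
theorem stmt9 {H : Type*} [NormedAddCommGroup H] [InnerProductSpace ℝ H]
    (z : H → ℝ) (θ g : H) (y : ℝ) (hy : y = -1 ∨ y = 1) (hg : g ≠ 0)
    (β : ℝ) (hβ : 0 < β)
    (hsmooth : ∀ Δ : H,
      y * z (θ + Δ) ≥ y * z θ + ⟪y • g, Δ⟫ - (β / 2) * ‖Δ‖ ^ 2)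
    (η : ℝ) (hη : 0 < η) (hη2 : η ≤ 2 / β)
    (Δ : H) (hΔ : Δ = η • ((y / (1 + Real.exp (y * z θ))) • g)) :
    y * z (θ + Δ) > y * z θ := by
  have hy2 : y * y = 1 := by rcases hy with h | h <;> simp [h]
  set D : ℝ := 1 + Real.exp (y * z θ) with hD
  have hD1 : 1 < D := by
    have := Real.exp_pos (y * z θ); linarith
  have hD0 : 0 < D := by linarith
  have hg2 : 0 < ‖g‖ ^ 2 := pow_pos (norm_pos_iff.mpr hg) 2
  set c : ℝ := η * (y / D) with hc
  have hΔ' : Δ = c • g := by rw [hΔ, smul_smul]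
  have hin : ⟪y • g, Δ⟫ = (η / D) * ‖g‖ ^ 2 := by
    rw [hΔ', real_inner_smul_left, real_inner_smul_right,
      real_inner_self_eq_norm_sq, hc]
    field_simp
    linear_combination hy2
  have hn : ‖Δ‖ ^ 2 = (η / D) ^ 2 * ‖g‖ ^ 2 := by
    rw [hΔ', norm_smul, mul_pow, Real.norm_eq_abs, sq_abs, hc]
    have h : (η * (y / D)) ^ 2 = (η / D) ^ 2 := by
      field_simp
      linear_combination hy2
    rw [h]
  have hβη : β * η ≤ 2 := by
    rw [le_div_iff₀ hβ] at hη2; linarith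
  have hs : 0 < η / D := by positivity
  have hsη : η / D < η := by
    rw [div_lt_iff₀ hD0]; nlinarith
  have key := hsmooth Δ
  rw [hin, hn] at key
  have : 0 < (η / D) * ‖g‖ ^ 2 - β / 2 * ((η / D) ^ 2 * ‖g‖ ^ 2) := by
    have h1 : β * (η / D) < 2 := by nlinarith
    have h2 := mul_pos (mul_pos hs hg2) (by linarith : (0:ℝ) < 2 - β * (η / D))
    nlinarith [h2]
  linarith
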